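/- Let N ⊆ N_ℝ be a lattice and C ⊆ N_ℝ a rational polyhedral strongly convex cone. Let S = C ∩ N and let m₁,…,m_p be the primitive integral generators of the rays of C. Then there exists a positive integer d such that for every m ∈ S, the element d·m lies in the subsemigroup of N generated by m₁,…,m_p. -/

import Mathlib

lemma stmt10_carath {p r : ℕ} (v : Fin p → Fin r → ℝ) :
    ∀ (n : ℕ) (t : Finset (Fin p)) (c : Fin p → ℝ), t.card ≤ n →
    (∀ i, 0 ≤ c i) → (∀ i ∉ t, c i = 0) →
    ∃ t' : Finset (Fin p),
      (∀ lam : Fin p → ℝ, (∀ i ∉ t', lam i = 0) → ∑ i, lam i • v i = 0 → ∀ i, lam i = 0) ∧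
      ∃ c' : Fin p → ℝ, (∀ i, 0 ≤ c' i) ∧ (∀ i ∉ t', c' i = 0) ∧
        ∑ i, c' i • v i = ∑ i, c i • v i := by
  intro n
  induction n with
  | zero =>
    intro t c hcard hc0 hsupp
    have ht : t = ∅ := Finset.card_eq_zero.mp (Nat.le_zero.mp hcard)
    subst ht
    exact ⟨∅, fun lam hl _ i => hl i (Finset.notMem_empty i), c, hc0, hsupp, rfl⟩
  | succ n ih =>
    intro t c hcard hc0 hsupp
    by_cases hind : ∀ lam : Fin p → ℝ, (∀ i ∉ t, lam i = 0) → ∑ i, lam i • v i = 0 →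
        ∀ i, lam i = 0
    · exact ⟨t, hind, c, hc0, hsupp, rfl⟩
    push_neg at hind
    obtain ⟨lam, hlsupp, hlsum, i₁, hi₁⟩ := hind
    obtain ⟨mu, hmsupp, hmsum, i₂, hi₂⟩ :
        ∃ mu : Fin p → ℝ, (∀ i ∉ t, mu i = 0) ∧ (∑ i, mu i • v i = 0) ∧ ∃ i, 0 < mu i := by
      rcases lt_or_gt_of_ne hi₁ with h | h
      · refine ⟨-lam, fun i hi => by simp [hlsupp i hi], ?_, i₁, by simpa using h⟩
        simp only [Pi.neg_apply, neg_smul, Finset.sum_neg_distrib, hlsum, neg_zero]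
      · exact ⟨lam, hlsupp, hlsum, i₁, h⟩
    set P : Finset (Fin p) := t.filter (fun i => 0 < mu i) with hP
    have hi₂t : i₂ ∈ t := by
      by_contra h; rw [hmsupp i₂ h] at hi₂; exact lt_irrefl 0 hi₂
    have hPne : P.Nonempty := ⟨i₂, Finset.mem_filter.mpr ⟨hi₂t, hi₂⟩⟩
    obtain ⟨k, hkP, hkmin⟩ := Finset.exists_min_image P (fun i => c i / mu i) hPne
    have hkt : k ∈ t := (Finset.mem_filter.mp hkP).1
    have hmuk : 0 < mu k := (Finset.mem_filter.mp hkP).2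
    set ρ : ℝ := c k / mu k with hρ
    have hρ0 : 0 ≤ ρ := div_nonneg (hc0 k) hmuk.le
    set c' : Fin p → ℝ := fun i => c i - ρ * mu i with hc'
    have h1 : ∀ i, 0 ≤ c' i := by
      intro i
      by_cases hiP : i ∈ P
      · have hmui : 0 < mu i := (Finset.mem_filter.mp hiP).2
        have := hkmin i hiP
        have : ρ * mu i ≤ c i := by
          rw [hρ]
          calc c k / mu k * mu i ≤ c i / mu i * mu i := by
                exact mul_le_mul_of_nonneg_right this hmui.le
            _ = c i := div_mul_cancel₀ _ hmui.ne'
        simpa [hc'] using sub_nonneg.mpr this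
      · have hmui : mu i ≤ 0 := by
          by_cases hit : i ∈ t
          · by_contra h
            exact hiP (Finset.mem_filter.mpr ⟨hit, lt_of_not_ge h⟩)
          · rw [hmsupp i hit]
        have : ρ * mu i ≤ 0 := mul_nonpos_of_nonneg_of_nonpos hρ0 hmui
        have := hc0 i
        simp only [hc']
        linarith
    have h2 : ∀ i ∉ t.erase k, c' i = 0 := by
      intro i hi
      rw [Finset.mem_erase, not_and_or, not_not] at hi
      rcases hi with h | h
      · subst h
        simp [hc', hρ, div_mul_cancel₀ _ hmuk.ne']
      · simp [hc', hsupp i h, hmsupp i h]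
    have h3 : ∑ i, c' i • v i = ∑ i, c i • v i := by
      simp only [hc', sub_smul, Finset.sum_sub_distrib]
      have : ∑ i, (ρ * mu i) • v i = ρ • ∑ i, mu i • v i := by
        rw [Finset.smul_sum]
        exact Finset.sum_congr rfl fun i _ => (smul_smul ρ (mu i) (v i)).symm
      rw [show (fun i => (ρ * mu i) • v i) = fun i => (ρ * mu i) • v i from rfl]
      rw [this, hmsum, smul_zero, sub_zero]
    have hcard' : (t.erase k).card ≤ n := by
      have := Finset.card_erase_of_mem hkt
      omega
    obtain ⟨t', hind', c'', h4, h5, h6⟩ := ih (t.erase k) c' hcard' h1 h2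
    exact ⟨t', hind', c'', h4, h5, h6.trans h3⟩

lemma stmt10_rat_int (q : ℚ) (d : ℕ) (hdvd : q.den ∣ d) : ∃ n : ℤ, (d : ℚ) * q = (n : ℚ) := by
  obtain ⟨k, hk⟩ := hdvd
  refine ⟨k * q.num, ?_⟩
  have h1 : (q.den : ℚ) * q = (q.num : ℚ) := by
    rw [mul_comm]; exact_mod_cast Rat.mul_den_eq_num q
  push_cast [hk]
  rw [show (q.den : ℚ) * (k : ℚ) * q = (k : ℚ) * ((q.den : ℚ) * q) by ring, h1]

lemma stmt10_denom {p r : ℕ} (g : Fin p → Fin r → ℤ) (t : Finset (Fin p))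
    (hind : ∀ lam : Fin p → ℝ, (∀ i ∉ t, lam i = 0) →
      (∑ i, lam i • (fun j => ((g i j : ℝ)) : Fin r → ℝ)) = 0 → ∀ i, lam i = 0) :
    ∃ d : ℕ, 0 < d ∧ ∀ (m : Fin r → ℤ) (c : Fin p → ℝ), (∀ i, 0 ≤ c i) →
      (∀ i ∉ t, c i = 0) →
      ((fun j => ((m j : ℝ))) = ∑ i, c i • (fun j => ((g i j : ℝ)))) →
      ∃ a : Fin p → ℕ, ∀ i, (d : ℝ) * c i = (a i : ℝ) := by
  classical
  set w : Fin p → (Fin r → ℚ) := fun i j => (g i j : ℚ) with hw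
  set v : Fin p → (Fin r → ℝ) := fun i j => (g i j : ℝ) with hv
  -- the linear map sending coefficients to their combination
  set f : ((↥t : Type) → ℚ) →ₗ[ℚ] (Fin r → ℚ) :=
    { toFun := fun c => ∑ i : ↥t, c i • w i
      map_add' := by
        intro x y; simp [add_smul, Finset.sum_add_distrib]
      map_smul' := by
        intro a x; simp [mul_smul, Finset.smul_sum] } with hf
  have hker : LinearMap.ker f = ⊥ := by
    rw [LinearMap.ker_eq_bot']
    intro x hx
    set xe : Fin p → ℚ := fun i => if h : i ∈ t then x ⟨i, h⟩ else 0 with hxe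
    have hsum : ∑ i, xe i • w i = 0 := by
      have h1 : ∑ i, xe i • w i = ∑ i ∈ t, xe i • w i := by
        refine (Finset.sum_subset (Finset.subset_univ _) ?_).symm
        intro i _ hi
        simp [hxe, dif_neg hi]
      have h2 : ∑ i ∈ t, xe i • w i = ∑ i : ↥t, x i • w i := by
        rw [← Finset.sum_coe_sort]
        refine Finset.sum_congr rfl ?_
        intro i _
        simp [hxe, dif_pos i.2]
      rw [h1, h2]
      exact hx
    have hzero : (∑ i, (fun i' => ((xe i' : ℚ) : ℝ)) i • (fun j => ((g i j : ℝ)) : Fin r → ℝ)) = 0 := by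
      funext j
      have h := congrFun hsum j
      simp only [Finset.sum_apply, Pi.smul_apply, smul_eq_mul, Pi.zero_apply, hw] at h ⊢
      exact_mod_cast congrArg (fun (q : ℚ) => (q : ℝ)) h
    have hreal : ∀ i, ((xe i : ℚ) : ℝ) = 0 :=
      hind _ (fun i hi => by simp [hxe, dif_neg hi]) hzero
    funext i
    have h := hreal i
    rw [Rat.cast_eq_zero] at h
    simpa [hxe, dif_pos i.2] using h
  obtain ⟨π, hπ⟩ := f.exists_leftInverse_of_injective hker
  set E : Fin r → (Fin r → ℚ) := fun j k => if j = k then 1 else 0 with hE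
  set d : ℕ := ∏ j : Fin r, ∏ s : ↥t, (π (E j) s).den with hd
  have hd0 : 0 < d := by
    refine Finset.prod_pos fun j _ => Finset.prod_pos fun s _ => (π (E j) s).pos
  have hdvd : ∀ (j : Fin r) (s : ↥t), (π (E j) s).den ∣ d := by
    intro j s
    have h1 : (π (E j) s).den ∣ ∏ s' : ↥t, (π (E j) s').den :=
      Finset.dvd_prod_of_mem _ (Finset.mem_univ s)
    have h2 : (∏ s' : ↥t, (π (E j) s').den) ∣ d :=
      Finset.dvd_prod_of_mem (fun j' => ∏ s' : ↥t, (π (E j') s').den) (Finset.mem_univ j)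
    exact dvd_trans h1 h2
  have hnd : ∀ (j : Fin r) (s : ↥t), ∃ n : ℤ, (d : ℚ) * π (E j) s = (n : ℚ) :=
    fun j s => stmt10_rat_int _ _ (hdvd j s)
  choose nd hnd using hnd
  refine ⟨d, hd0, ?_⟩
  intro m c hc0 hcsupp hm
  set mq : Fin r → ℚ := fun j => (m j : ℚ) with hmq
  -- π applied to mq, expanded
  have hπmq : ∀ s : ↥t, π mq s = ∑ j, mq j * π (E j) s := by
    intro s
    have h1 : mq = ∑ j, mq j • E j := by
      have := pi_eq_sum_univ mq
      exact this
    rw [h1, map_sum]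
    simp only [map_smul]
    rw [Finset.sum_apply]
    simp only [Pi.smul_apply, smul_eq_mul]
    refine Finset.sum_congr rfl fun x _ => ?_
    congr 1
    symm
    simp [hE, mul_ite, Finset.sum_ite_eq']
  -- key: c i equals the rational coordinate
  have hkey : ∀ (i : Fin p) (hi : i ∈ t), c i = ((π mq ⟨i, hi⟩ : ℚ) : ℝ) := by
    intro i hi
    set K : Fin r → ℝ := fun j => ((π (E j) ⟨i, hi⟩ : ℚ) : ℝ) with hK
    -- evaluate the linear functional L x = ∑ j, x j * K j on both sides of hm
    have hA : ∑ j, (m j : ℝ) * K j = ((π mq ⟨i, hi⟩ : ℚ) : ℝ) := by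
      rw [hπmq ⟨i, hi⟩]
      push_cast
      rfl
    have hC : ∀ i' : Fin p, ∑ j, v i' j * K j = ((π (w i') ⟨i, hi⟩ : ℚ) : ℝ) := by
      intro i'
      have h1 : w i' = ∑ j, w i' j • E j := pi_eq_sum_univ (w i')
      have h2 : π (w i') ⟨i, hi⟩ = ∑ j, w i' j * π (E j) ⟨i, hi⟩ := by
        rw [h1, map_sum]
        simp only [map_smul]
        rw [Finset.sum_apply]
        simp only [Pi.smul_apply, smul_eq_mul]
        refine Finset.sum_congr rfl fun x _ => ?_
        congr 1
        symm
        simp [hE, mul_ite, Finset.sum_ite_eq']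
      rw [h2]
      push_cast
      rfl
    have hD : ∀ (i' : Fin p) (hi' : i' ∈ t),
        π (w i') ⟨i, hi⟩ = if i' = i then 1 else 0 := by
      intro i' hi'
      have hsingle : f (Pi.single (⟨i', hi'⟩ : ↥t) 1) = w i' := by
        simp only [hf, LinearMap.coe_mk, AddHom.coe_mk]
        show ∑ i : ↥t, (Pi.single (⟨i', hi'⟩ : ↥t) (1 : ℚ) : ↥t → ℚ) i • w i = w i'
        rw [Finset.sum_eq_single (⟨i', hi'⟩ : ↥t)]
        · simp
        · intro b _ hb; simp [Pi.single_eq_of_ne hb]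
        · intro h; exact absurd (Finset.mem_univ _) h
      have := congrArg π hsingle
      rw [← LinearMap.comp_apply, hπ] at this
      rw [← this]
      simp only [LinearMap.id_apply]
      by_cases h : i' = i
      · subst h; simp
      · rw [Pi.single_eq_of_ne, if_neg h]
        intro hcon
        exact h (congrArg Subtype.val hcon).symm
    have hB : ∑ j, (m j : ℝ) * K j = ∑ i', c i' * ((π (w i') ⟨i, hi⟩ : ℚ) : ℝ) := by
      have hmj : ∀ j, (m j : ℝ) = ∑ i', c i' * v i' j := by
        intro j
        have := congrFun hm j
        simpa [Finset.sum_apply, smul_eq_mul] using this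
      calc ∑ j, (m j : ℝ) * K j = ∑ j, (∑ i', c i' * v i' j) * K j := by
            exact Finset.sum_congr rfl fun j _ => by rw [hmj j]
        _ = ∑ j, ∑ i', c i' * v i' j * K j := by
            exact Finset.sum_congr rfl fun j _ => Finset.sum_mul ..
        _ = ∑ i', ∑ j, c i' * v i' j * K j := Finset.sum_comm
        _ = ∑ i', c i' * ∑ j, v i' j * K j := by
            refine Finset.sum_congr rfl fun i' _ => ?_
            rw [Finset.mul_sum]
            exact Finset.sum_congr rfl fun j _ => by ring
        _ = ∑ i', c i' * ((π (w i') ⟨i, hi⟩ : ℚ) : ℝ) := by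
            exact Finset.sum_congr rfl fun i' _ => by rw [hC i']
    have hE2 : ∑ i', c i' * ((π (w i') ⟨i, hi⟩ : ℚ) : ℝ) = c i := by
      rw [← Finset.sum_subset (Finset.subset_univ t)
        (fun i' _ hi' => by rw [hcsupp i' hi', zero_mul])]
      rw [Finset.sum_congr rfl (fun i' hi' => by rw [hD i' hi'])]
      simp only [apply_ite (fun (q : ℚ) => (q : ℝ)), Rat.cast_one, Rat.cast_zero,
        mul_ite, mul_one, mul_zero]
      exact Finset.sum_ite_eq' t i c ▸ if_pos hi
    rw [← hA, hB, hE2]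
  -- now assemble the natural numbers
  refine ⟨fun i => if h : i ∈ t then (∑ j, m j * nd j ⟨i, h⟩).toNat else 0, ?_⟩
  intro i
  by_cases hi : i ∈ t
  · have hq : (d : ℚ) * π mq ⟨i, hi⟩ = ((∑ j, m j * nd j ⟨i, hi⟩ : ℤ) : ℚ) := by
      rw [hπmq ⟨i, hi⟩, Finset.mul_sum]
      push_cast
      refine Finset.sum_congr rfl fun j _ => ?_
      rw [← hnd j ⟨i, hi⟩]
      ring
    have hq0 : 0 ≤ π mq ⟨i, hi⟩ := by
      have := hc0 i
      rw [hkey i hi] at this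
      exact_mod_cast this
    have hN0 : 0 ≤ ∑ j, m j * nd j ⟨i, hi⟩ := by
      have : (0 : ℚ) ≤ (d : ℚ) * π mq ⟨i, hi⟩ :=
        mul_nonneg (by positivity) hq0
      rw [hq] at this
      exact_mod_cast this
    simp only [dif_pos hi]
    rw [hkey i hi]
    rw [show (((∑ j, m j * nd j ⟨i, hi⟩).toNat : ℕ) : ℝ) = ((∑ j, m j * nd j ⟨i, hi⟩ : ℤ) : ℝ)
      from by exact_mod_cast congrArg (fun z : ℤ => (z : ℝ)) (Int.toNat_of_nonneg hN0)]
    exact_mod_cast congrArg (fun q : ℚ => (q : ℝ)) hq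
  · simp only [dif_neg hi]
    rw [hcsupp i hi]
    simp



/-- Lemma 4.5: let `C ⊆ ℝʳ` be the rational polyhedral strongly convex cone generated by
lattice vectors `g₁, …, g_p` (e.g. the primitive integral generators of its rays).
Then there is a positive integer `d` such that for every lattice point `m ∈ C`,
the element `d·m` lies in the subsemigroup generated by `g₁, …, g_p`. -/
theorem stmt10 {r p : ℕ} (g : Fin p → (Fin r → ℤ)) (C : Set (Fin r → ℝ))
    (hC : C = {x | ∃ c : Fin p → ℝ, (∀ i, 0 ≤ c i) ∧
      x = ∑ i, c i • (fun j => ((g i j : ℝ)))})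
    (hstrconv : ∀ x ∈ C, -x ∈ C → x = 0) :
    ∃ d : ℕ, 0 < d ∧ ∀ m : Fin r → ℤ, (fun j => ((m j : ℝ))) ∈ C →
      ∃ a : Fin p → ℕ, (fun j => (d : ℤ) * m j) = ∑ i, (a i : ℤ) • g i := by
  classical
  have hD : ∀ t : Finset (Fin p), ∃ D : ℕ, 0 < D ∧
      ((∀ lam : Fin p → ℝ, (∀ i ∉ t, lam i = 0) →
        (∑ i, lam i • (fun j => ((g i j : ℝ)) : Fin r → ℝ)) = 0 → ∀ i, lam i = 0) →
      ∀ (m : Fin r → ℤ) (c : Fin p → ℝ), (∀ i, 0 ≤ c i) → (∀ i ∉ t, c i = 0) →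
      ((fun j => ((m j : ℝ))) = ∑ i, c i • (fun j => ((g i j : ℝ)))) →
      ∃ a : Fin p → ℕ, ∀ i, (D : ℝ) * c i = (a i : ℝ)) := by
    intro t
    by_cases h : ∀ lam : Fin p → ℝ, (∀ i ∉ t, lam i = 0) →
        (∑ i, lam i • (fun j => ((g i j : ℝ)) : Fin r → ℝ)) = 0 → ∀ i, lam i = 0
    · obtain ⟨d, hd0, hd⟩ := stmt10_denom g t h
      exact ⟨d, hd0, fun _ => hd⟩
    · exact ⟨1, one_pos, fun hcon => absurd hcon h⟩
  choose D hD0 hDspec using hD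
  refine ⟨∏ t : Finset (Fin p), D t, Finset.prod_pos (fun t _ => hD0 t), ?_⟩
  intro m hm
  rw [hC] at hm
  obtain ⟨c, hc0, hceq⟩ := hm
  obtain ⟨t, hind, c', hc'0, hc'supp, hc'sum⟩ :=
    stmt10_carath (fun i j => (g i j : ℝ)) Finset.univ.card Finset.univ c le_rfl hc0
      (fun i hi => absurd (Finset.mem_univ i) hi)
  have hmeq : (fun j => ((m j : ℝ))) = ∑ i, c' i • (fun j => ((g i j : ℝ)) : Fin r → ℝ) :=
    hceq.trans hc'sum.symm
  obtain ⟨a, ha⟩ := hDspec t hind m c' hc'0 hc'supp hmeq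
  obtain ⟨k, hk⟩ := Finset.dvd_prod_of_mem D (Finset.mem_univ t)
  refine ⟨fun i => k * a i, ?_⟩
  funext j
  have hmj : (m j : ℝ) = ∑ i, c' i * (g i j : ℝ) := by
    have := congrFun hmeq j
    simpa [Finset.sum_apply, smul_eq_mul] using this
  have hreal : ((∏ t' : Finset (Fin p), D t' : ℕ) : ℝ) * (m j : ℝ)
      = ∑ i, ((k * a i : ℕ) : ℝ) * (g i j : ℝ) := by
    rw [hmj, hk]
    push_cast
    rw [Finset.mul_sum]
    refine Finset.sum_congr rfl fun i _ => ?_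
    calc (D t : ℝ) * (k : ℝ) * (c' i * (g i j : ℝ))
        = (k : ℝ) * (((D t : ℝ) * c' i) * (g i j : ℝ)) := by ring
      _ = (k : ℝ) * (a i : ℝ) * (g i j : ℝ) := by rw [ha i]; ring
  have hsum : (∑ i, ((k * a i : ℕ) : ℤ) • g i) j = ∑ i, ((k * a i : ℕ) : ℤ) * g i j := by
    simp [Finset.sum_apply, smul_eq_mul]
  rw [hsum]
  exact_mod_cast hreal
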